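/- The Smith–Kidger Type 6 element does not satisfy the weak orthogonality of Lemma 2: there exists a polynomial p in the Type 6 space P₂ ⊕ span{x₁x₂x₃, x₁x₂²x₃², x₁²x₂x₃², x₁²x₂²x₃} vanishing at the four points (1,±1,±1) and at (1,0,0), whose integral over the face {1}×[−1,1]² is nonzero. -/

import Mathlib

open MvPolynomial

noncomputable def SK6 : Submodule ℝ (MvPolynomial (Fin 3) ℝ) :=
  MvPolynomial.restrictTotalDegree (Fin 3) ℝ 2 ⊔
    Submodule.span ℝ {X 0 * X 1 * X 2, X 0 * X 1 ^ 2 * X 2 ^ 2,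
      X 0 ^ 2 * X 1 * X 2 ^ 2, X 0 ^ 2 * X 1 ^ 2 * X 2}

theorem stmt18 :
    ∃ p ∈ SK6,
      eval ![1, 1, 1] p = 0 ∧ eval ![1, 1, -1] p = 0 ∧
      eval ![1, -1, 1] p = 0 ∧ eval ![1, -1, -1] p = 0 ∧
      eval ![1, 0, 0] p = 0 ∧
      (∫ y in (-1 : ℝ)..1, ∫ z in (-1 : ℝ)..1, eval ![1, y, z] p) ≠ 0 := by
  refine ⟨X 0 * X 1 ^ 2 * X 2 ^ 2 - C (1/2) * X 1 ^ 2 - C (1/2) * X 2 ^ 2, ?_, ?_, ?_, ?_, ?_, ?_, ?_⟩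
  · have h1 : (X 0 * X 1 ^ 2 * X 2 ^ 2 : MvPolynomial (Fin 3) ℝ) ∈ SK6 := by
      apply Submodule.mem_sup_right
      exact Submodule.subset_span (by simp)
    have h2 : (C (1/2) * X 1 ^ 2 : MvPolynomial (Fin 3) ℝ) ∈ SK6 := by
      apply Submodule.mem_sup_left
      rw [mem_restrictTotalDegree]
      calc totalDegree (C (1/2) * X 1 ^ 2 : MvPolynomial (Fin 3) ℝ) ≤ _ + _ := totalDegree_mul _ _
        _ ≤ 2 := by simp [totalDegree_C, totalDegree_X_pow]
    have h3 : (C (1/2) * X 2 ^ 2 : MvPolynomial (Fin 3) ℝ) ∈ SK6 := by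
      apply Submodule.mem_sup_left
      rw [mem_restrictTotalDegree]
      calc totalDegree (C (1/2) * X 2 ^ 2 : MvPolynomial (Fin 3) ℝ) ≤ _ + _ := totalDegree_mul _ _
        _ ≤ 2 := by simp [totalDegree_C, totalDegree_X_pow]
    exact Submodule.sub_mem _ (Submodule.sub_mem _ h1 h2) h3
  · simp; norm_num
  · simp; norm_num
  · simp; norm_num
  · simp; norm_num
  · simp
  · have key : ∀ y : ℝ, (∫ z in (-1:ℝ)..1, eval ![1, y, z]
        (X 0 * X 1 ^ 2 * X 2 ^ 2 - C (1/2) * X 1 ^ 2 - C (1/2) * X 2 ^ 2 : MvPolynomial (Fin 3) ℝ))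
        = (2/3) * y ^ 2 - 1/3 - y ^ 2 := by
      intro y
      have : ∀ z : ℝ, eval ![1, y, z]
          (X 0 * X 1 ^ 2 * X 2 ^ 2 - C (1/2) * X 1 ^ 2 - C (1/2) * X 2 ^ 2 : MvPolynomial (Fin 3) ℝ)
          = (y ^ 2 - 1/2) * z ^ 2 + (-(1/2) * y ^ 2) := by
        intro z; simp; ring
      rw [intervalIntegral.integral_congr (fun z _ => this z)]
      rw [intervalIntegral.integral_add ((by fun_prop : Continuous fun x : ℝ => (y ^ 2 - 1/2) * x ^ 2).intervalIntegrable _ _) (intervalIntegrable_const),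
        intervalIntegral.integral_const_mul, integral_pow, intervalIntegral.integral_const]
      rw [smul_eq_mul]
      ring
    rw [intervalIntegral.integral_congr (fun y _ => key y)]
    rw [show (fun y : ℝ => (2/3) * y ^ 2 - 1/3 - y ^ 2) = fun y : ℝ => (-(1/3)) * y ^ 2 + (-(1/3)) by funext y; ring]
    rw [intervalIntegral.integral_add ((by fun_prop : Continuous fun x : ℝ => (-(1/3) : ℝ) * x ^ 2).intervalIntegrable _ _) (intervalIntegrable_const),
      intervalIntegral.integral_const_mul, integral_pow, intervalIntegral.integral_const]
    rw [smul_eq_mul]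
    norm_num
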